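/- Let V be a finite set of points p : V → ℝ^d whose affine span is all of ℝ^d, let Γ be a finitely generated subgroup of ℝ^d (thought of as a group of translations), and let q : V → ℝ^d. Suppose that for all u, v ∈ V and all γ ∈ Γ, ‖p(v) − (p(u) + γ)‖ = ‖q(v) − (q(u) + γ)‖. Then there exists an isometry h of ℝ^d such that q = h ∘ p and h(x) − h(0) = x for every x ∈ Γ (i.e., the linear part of h fixes every element of Γ). -/

import Mathlib

open scoped RealInnerProductSpace

private lemma inner_eq_of_norms_aux {E : Type*} [NormedAddCommGroup E] [InnerProductSpace ℝ E]
    {x y x' y' : E} (hx : ‖x‖ = ‖x'‖) (hy : ‖y‖ = ‖y'‖) (hxy : ‖x - y‖ = ‖x' - y'‖) :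
    ⟪x, y⟫ = ⟪x', y'⟫ := by
  have h1 : ‖x - y‖ ^ 2 = ‖x‖ ^ 2 - 2 * ⟪x, y⟫ + ‖y‖ ^ 2 := norm_sub_sq_real x y
  have h2 : ‖x' - y'‖ ^ 2 = ‖x'‖ ^ 2 - 2 * ⟪x', y'⟫ + ‖y'‖ ^ 2 := norm_sub_sq_real x' y'
  rw [hx, hy, hxy] at h1
  linarith

/-- Proposition: necessity direction.
If the complete `Γ`-labeled distance data of `p` and `q` agree, where `p` affinely spans
`ℝ^d` and `Γ` is a finitely generated group of translations of `ℝ^d`, then `q = h ∘ p`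
for some `L(Γ)`-invariant isometry `h` of `ℝ^d`. -/
theorem periodic_congruence_of_equal_labeled_distances
    {d : ℕ} {V : Type*} [Finite V]
    (p q : V → EuclideanSpace ℝ (Fin d))
    (Γ : AddSubgroup (EuclideanSpace ℝ (Fin d))) (hΓ : Γ.FG)
    (hspan : affineSpan ℝ (Set.range p) = ⊤)
    (hdist : ∀ u v : V, ∀ γ ∈ Γ, ‖p v - (p u + γ)‖ = ‖q v - (q u + γ)‖) :
    ∃ h : EuclideanSpace ℝ (Fin d) ≃ᵢ EuclideanSpace ℝ (Fin d),
      (∀ v, q v = h (p v)) ∧ ∀ x ∈ Γ, h x - h 0 = x := by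
  classical
  have hne : Nonempty V := by
    by_contra hn
    rw [not_nonempty_iff] at hn
    rw [Set.range_eq_empty p, AffineSubspace.span_empty] at hspan
    exact AffineSubspace.bot_ne_top ℝ (EuclideanSpace ℝ (Fin d)) (EuclideanSpace ℝ (Fin d)) hspan
  obtain ⟨u₀⟩ := hne
  have hnorm : ∀ u v : V, ‖p v - p u‖ = ‖q v - q u‖ := by
    intro u v
    have := hdist u v 0 (zero_mem Γ)
    simpa using this
  set a : V → EuclideanSpace ℝ (Fin d) := fun v => p v - p u₀ with ha
  set b : V → EuclideanSpace ℝ (Fin d) := fun v => q v - q u₀ with hb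
  have hinner : ∀ u v : V, ⟪a u, a v⟫ = ⟪b u, b v⟫ := by
    intro u v
    refine inner_eq_of_norms_aux (hnorm u₀ u) (hnorm u₀ v) ?_
    have h1 : a u - a v = p u - p v := by
      show p u - p u₀ - (p v - p u₀) = p u - p v
      abel
    have h2 : b u - b v = q u - q v := by
      show q u - q u₀ - (q v - q u₀) = q u - q v
      abel
    rw [h1, h2]
    exact hnorm v u
  -- spanning
  have hvs : vectorSpan ℝ (Set.range p) = ⊤ := by
    rw [← direction_affineSpan, hspan, AffineSubspace.direction_top]
  have hsp : Submodule.span ℝ (Set.range a) = ⊤ := by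
    rw [eq_top_iff, ← hvs, vectorSpan_def]
    refine Submodule.span_le.2 ?_
    rintro z hz
    rw [Set.mem_vsub] at hz
    obtain ⟨x, ⟨u, rfl⟩, y, ⟨v, rfl⟩, rfl⟩ := hz
    have hz' : p u -ᵥ p v = a u - a v := by
      show p u - p v = p u - p u₀ - (p v - p u₀)
      abel
    rw [hz']
    exact sub_mem (Submodule.subset_span ⟨u, rfl⟩) (Submodule.subset_span ⟨v, rfl⟩)
  obtain ⟨t, hts, hsp', hli⟩ := exists_linearIndependent ℝ (Set.range a)
  have hspt : Submodule.span ℝ t = ⊤ := by rw [hsp', hsp]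
  let B : Module.Basis t ℝ (EuclideanSpace ℝ (Fin d)) := Module.Basis.mk hli (by rw [Subtype.range_coe, hspt])
  have hB : ∀ i : t, B i = (i : EuclideanSpace ℝ (Fin d)) := fun i => Module.Basis.mk_apply hli _ i
  have hpick : ∀ i : t, ∃ v : V, a v = (i : EuclideanSpace ℝ (Fin d)) := fun i => hts i.2
  let vc : t → V := fun i => (hpick i).choose
  have hvc : ∀ i : t, a (vc i) = (i : EuclideanSpace ℝ (Fin d)) := fun i => (hpick i).choose_spec
  let T₀ : EuclideanSpace ℝ (Fin d) →ₗ[ℝ] EuclideanSpace ℝ (Fin d) :=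
    B.constr ℝ (fun i => b (vc i))
  have hT₀ : ∀ i : t, T₀ (i : EuclideanSpace ℝ (Fin d)) = b (vc i) := by
    intro i
    rw [← hB i]
    exact B.constr_basis ℝ _ i
  have claim1 : ∀ x : EuclideanSpace ℝ (Fin d), ∀ v : V, ⟪T₀ x, b v⟫ = ⟪x, a v⟫ := by
    intro x
    have hx : x ∈ Submodule.span ℝ t := by rw [hspt]; trivial
    induction hx using Submodule.span_induction with
    | mem z hz =>
      intro v
      rw [hT₀ ⟨z, hz⟩, ← hinner (vc ⟨z, hz⟩) v, hvc ⟨z, hz⟩]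
    | zero => intro v; simp
    | add x y hx hy ihx ihy =>
      intro v; rw [map_add, inner_add_left, inner_add_left, ihx v, ihy v]
    | smul c x hx ih =>
      intro v; rw [map_smul, real_inner_smul_left, real_inner_smul_left, ih v]
  have claim2 : ∀ x y : EuclideanSpace ℝ (Fin d), ⟪T₀ x, T₀ y⟫ = ⟪x, y⟫ := by
    intro x y
    have hy : y ∈ Submodule.span ℝ t := by rw [hspt]; trivial
    induction hy using Submodule.span_induction with
    | mem z hz =>
      rw [hT₀ ⟨z, hz⟩, claim1 x (vc ⟨z, hz⟩), hvc ⟨z, hz⟩]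
    | zero => simp
    | add y y' hy hy' ihy ihy' =>
      rw [map_add, inner_add_right, inner_add_right, ihy, ihy']
    | smul c y hy ih =>
      rw [map_smul, real_inner_smul_right, real_inner_smul_right, ih]
  have claim3 : ∀ v : V, T₀ (a v) = b v := by
    intro v
    have e1 : ⟪T₀ (a v), T₀ (a v)⟫ = ⟪a v, a v⟫ := claim2 _ _
    have e2 : ⟪T₀ (a v), b v⟫ = ⟪a v, a v⟫ := claim1 _ v
    have e3 : ⟪b v, T₀ (a v)⟫ = ⟪a v, a v⟫ := by rw [real_inner_comm]; exact e2
    have e4 : ⟪b v, b v⟫ = ⟪a v, a v⟫ := (hinner v v).symm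
    have h0 : ⟪T₀ (a v) - b v, T₀ (a v) - b v⟫ = 0 := by
      rw [inner_sub_sub_self, e1, e2, e3, e4]
      ring
    rwa [inner_self_eq_zero, sub_eq_zero] at h0
  let T : EuclideanSpace ℝ (Fin d) →ₗᵢ[ℝ] EuclideanSpace ℝ (Fin d) := T₀.isometryOfInner claim2
  let Te : EuclideanSpace ℝ (Fin d) ≃ₗᵢ[ℝ] EuclideanSpace ℝ (Fin d) :=
    T.toLinearIsometryEquiv rfl
  have hTe : ∀ x : EuclideanSpace ℝ (Fin d), Te x = T₀ x := by
    intro x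
    have h1 : Te x = T x := by rw [LinearIsometry.coe_toLinearIsometryEquiv]
    rw [h1]
    rfl
  let h : EuclideanSpace ℝ (Fin d) ≃ᵢ EuclideanSpace ℝ (Fin d) :=
    ((IsometryEquiv.addRight (-(p u₀))).trans Te.toIsometryEquiv).trans
      (IsometryEquiv.addRight (q u₀))
  have hh : ∀ x : EuclideanSpace ℝ (Fin d), h x = T₀ (x - p u₀) + q u₀ := by
    intro x
    simp only [h, IsometryEquiv.trans_apply, IsometryEquiv.addRight_apply,
      LinearIsometryEquiv.coe_toIsometryEquiv, hTe, sub_eq_add_neg]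
  refine ⟨h, ?_, ?_⟩
  · intro v
    rw [hh (p v), claim3 v]
    show q v = q v - q u₀ + q u₀
    abel
  · intro x hx
    have hγi : ∀ v : V, ⟪a v, x⟫ = ⟪b v, x⟫ := by
      intro v
      refine inner_eq_of_norms_aux (hnorm u₀ v) rfl ?_
      have h1 := hdist u₀ v x hx
      rw [sub_add_eq_sub_sub, sub_add_eq_sub_sub] at h1
      exact h1
    have claim4 : ∀ y : EuclideanSpace ℝ (Fin d), ⟪T₀ y, x⟫ = ⟪y, x⟫ := by
      intro y
      have hy : y ∈ Submodule.span ℝ t := by rw [hspt]; trivial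
      induction hy using Submodule.span_induction with
      | mem z hz =>
        rw [hT₀ ⟨z, hz⟩, ← hγi (vc ⟨z, hz⟩), hvc ⟨z, hz⟩]
      | zero => simp
      | add y y' hy hy' ihy ihy' =>
        rw [map_add, inner_add_left, inner_add_left, ihy, ihy']
      | smul c y hy ih =>
        rw [map_smul, real_inner_smul_left, real_inner_smul_left, ih]
    have hfix : T₀ x = x := by
      have hzero : ∀ y : EuclideanSpace ℝ (Fin d), ⟪T₀ y, T₀ x - x⟫ = 0 := by
        intro y
        rw [inner_sub_right, claim2, claim4, sub_self]
      obtain ⟨y, hy⟩ := Te.surjective (T₀ x - x)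
      rw [hTe] at hy
      have h0 := hzero y
      rw [hy, inner_self_eq_zero, sub_eq_zero] at h0
      exact h0
    rw [hh x, hh 0, zero_sub]
    have e : T₀ (x - p u₀) + q u₀ - (T₀ (-p u₀) + q u₀) = T₀ (x - p u₀) - T₀ (-p u₀) := by abel
    rw [e, ← map_sub, sub_neg_eq_add, sub_add_cancel, hfix]
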